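/- Let n ≥ 1 be an integer. The constant κ(n) = ⌊log_2 n⌋ + 2(n + 1 − 2^{⌊log_2 n⌋})/(n + 1) in the Hyers–Ulam stability theorem for ε-convex functions is best possible: there exists a 1-convex function f on the convex set Δ_n ⊆ ℝ^{n+1} such that for every convex function g : Δ_n → ℝ with g(x) ≤ f(x) for all x ∈ Δ_n, one has sup_{x∈Δ_n} (f(x) − g(x)) ≥ κ(n). -/

import Mathlib

open Finset

/-- `κ(n) = ⌊log_2 n⌋ + 2(n+1-2^⌊log_2 n⌋)/(n+1)`. -/
noncomputable def kappa2 (n : ℕ) : ℝ :=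
  (⌊Real.logb 2 n⌋ : ℝ) +
    2 * ((n : ℝ) + 1 - (2 : ℝ) ^ (⌊Real.logb 2 n⌋ : ℤ)) / ((n : ℝ) + 1)

open Classical in
/-- Achievable expected code lengths (Kraft inequality on the support) for `x`. -/
noncomputable def costSet18 (n : ℕ) (x : Fin (n + 1) → ℝ) : Set ℝ :=
  {c | ∃ d : Fin (n + 1) → ℕ,
    (∑ j, if x j ≠ 0 then ((2 : ℝ) ^ (d j))⁻¹ else 0) ≤ 1 ∧
    c = ∑ j, x j * (d j : ℝ)}

/-- The extremal 1-convex function: optimal prefix-code cost of `x`. -/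
noncomputable def Efun18 (n : ℕ) (x : Fin (n + 1) → ℝ) : ℝ := sInf (costSet18 n x)

lemma costSet18_nonempty (n : ℕ) (x : Fin (n + 1) → ℝ) : (costSet18 n x).Nonempty := by
  classical
  refine ⟨∑ j, x j * ((n + 1 : ℕ) : ℝ), fun _ => n + 1, ?_, rfl⟩
  have h1 : (∑ j : Fin (n+1), if x j ≠ 0 then ((2:ℝ) ^ (n+1))⁻¹ else 0)
      ≤ ∑ _j : Fin (n+1), ((2:ℝ) ^ (n+1))⁻¹ := by
    refine Finset.sum_le_sum fun j _ => ?_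
    split
    · exact le_rfl
    · positivity
  refine h1.trans ?_
  rw [Finset.sum_const, Finset.card_univ, Fintype.card_fin, nsmul_eq_mul,
    ← div_eq_mul_inv, div_le_one (by positivity)]
  exact_mod_cast (Nat.lt_two_pow_self (n := n+1)).le

lemma costSet18_bddBelow (n : ℕ) {x : Fin (n + 1) → ℝ} (hx : ∀ j, 0 ≤ x j) :
    BddBelow (costSet18 n x) := by
  refine ⟨0, fun c hc => ?_⟩
  obtain ⟨d, _, rfl⟩ := hc
  exact Finset.sum_nonneg fun j _ => mul_nonneg (hx j) (by positivity)

lemma Efun18_single (n : ℕ) (j : Fin (n + 1)) :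
    Efun18 n (Pi.single j 1) ≤ 0 := by
  classical
  have hx : ∀ i, 0 ≤ (Pi.single j 1 : Fin (n+1) → ℝ) i := by
    intro i
    rcases eq_or_ne i j with h | h <;> simp [Pi.single_apply, h]
  refine csInf_le (costSet18_bddBelow n hx) ⟨fun _ => 0, ?_, ?_⟩
  · have h : ∀ i : Fin (n+1),
        (if (Pi.single j 1 : Fin (n+1) → ℝ) i ≠ 0 then ((2:ℝ) ^ ((fun _ => 0) i : ℕ))⁻¹ else 0)
          = if i = j then 1 else 0 := by
      intro i
      rcases eq_or_ne i j with h | h <;> simp [Pi.single_apply, h]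
    rw [Finset.sum_congr rfl (fun i _ => h i)]
    simp
  · simp

/-- Per-symbol Kraft–Huffman lower bound. -/
lemma perj18 (M d : ℕ) : (M : ℝ) + 2 ≤ (d : ℝ) + 2 ^ (M + 1) * ((2 : ℝ) ^ d)⁻¹ := by
  rcases le_or_gt d M with h | h
  · have hle : d ≤ M + 1 := by omega
    have hpow : (2:ℝ) ^ (M + 1) * ((2:ℝ) ^ d)⁻¹ = 2 ^ (M + 1 - d) :=
      (pow_sub₀ (2:ℝ) two_ne_zero hle).symm
    rw [hpow]
    have hk' : ((M + 1 - d : ℕ) : ℝ) + 1 ≤ (2:ℝ) ^ (M + 1 - d) := by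
      exact_mod_cast Nat.lt_two_pow_self (n := M + 1 - d)
    have hc : ((M + 1 - d : ℕ) : ℝ) = (M:ℝ) + 1 - (d:ℝ) := by
      rw [Nat.cast_sub hle]; push_cast; ring
    rw [hc] at hk'
    linarith
  · rcases Nat.lt_or_ge d (M+2) with h2 | h2
    · have hd : d = M + 1 := by omega
      subst hd
      rw [mul_inv_cancel₀ (by positivity)]
      push_cast; linarith
    · have hd : (M:ℝ) + 2 ≤ (d:ℝ) := by exact_mod_cast h2
      have hpos : (0:ℝ) < 2 ^ (M+1) * ((2:ℝ) ^ d)⁻¹ := by positivity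
      linarith

lemma Efun18_approx_convex (n : ℕ) {x y : Fin (n+1) → ℝ}
    (hx : x ∈ stdSimplex ℝ (Fin (n+1))) (hy : y ∈ stdSimplex ℝ (Fin (n+1)))
    {t : ℝ} (h0 : 0 ≤ t) (h1 : t ≤ 1) :
    Efun18 n (t • x + (1 - t) • y) ≤ t * Efun18 n x + (1 - t) * Efun18 n y + 1 := by
  classical
  obtain ⟨hx0, hx1⟩ := hx
  obtain ⟨hy0, hy1⟩ := hy
  rcases h0.eq_or_lt with h | ht0
  · have hxy : t • x + (1 - t) • y = y := by
      funext i; simp [← h]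
    rw [hxy, ← h]
    ring_nf
    linarith
  rcases h1.eq_or_lt with h | ht1
  · have hxy : t • x + (1 - t) • y = x := by
      funext i; simp [h]
    rw [hxy, h]
    ring_nf
    linarith
  -- main case 0 < t < 1
  set w : Fin (n+1) → ℝ := t • x + (1 - t) • y with hw
  have hwj : ∀ j, w j = t * x j + (1 - t) * y j := fun j => by
    simp [hw, smul_eq_mul]
  have hwpos : ∀ j, 0 ≤ w j := fun j => by
    rw [hwj]
    have := hx0 j; have := hy0 j
    nlinarith
  refine le_of_forall_pos_le_add fun ε hε => ?_
  obtain ⟨a, ha, halt⟩ := Real.lt_sInf_add_pos (costSet18_nonempty n x) hε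
  obtain ⟨b, hb, hblt⟩ := Real.lt_sInf_add_pos (costSet18_nonempty n y) hε
  obtain ⟨d1, hk1, rfl⟩ := ha
  obtain ⟨d2, hk2, rfl⟩ := hb
  set D : Fin (n+1) → ℕ := fun j =>
    1 + (if x j ≠ 0 then (if y j ≠ 0 then min (d1 j) (d2 j) else d1 j) else d2 j) with hD
  -- Kraft inequality for D
  have hpt : ∀ j : Fin (n+1),
      (if w j ≠ 0 then ((2:ℝ) ^ (D j))⁻¹ else 0)
        ≤ (if x j ≠ 0 then ((2:ℝ) ^ (d1 j))⁻¹ else 0) / 2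
          + (if y j ≠ 0 then ((2:ℝ) ^ (d2 j))⁻¹ else 0) / 2 := by
    intro j
    have hhalf : ∀ k : ℕ, ((2:ℝ) ^ (1 + k))⁻¹ = ((2:ℝ) ^ k)⁻¹ / 2 := by
      intro k; rw [pow_add, pow_one, mul_inv]; ring
    have hA : (0:ℝ) ≤ (if x j ≠ 0 then ((2:ℝ) ^ (d1 j))⁻¹ else 0) := by
      split
      · positivity
      · exact le_rfl
    have hB : (0:ℝ) ≤ (if y j ≠ 0 then ((2:ℝ) ^ (d2 j))⁻¹ else 0) := by
      split
      · positivity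
      · exact le_rfl
    by_cases hw0 : w j ≠ 0
    · rw [if_pos hw0]
      by_cases hxj : x j = 0 <;> by_cases hyj : y j = 0
      · exact absurd (by rw [hwj, hxj, hyj]; ring) hw0
      · have hDj : D j = 1 + d2 j := by simp [hD, hxj]
        rw [if_neg (by simp [hxj]), if_pos hyj, hDj, hhalf]
        linarith
      · have hDj : D j = 1 + d1 j := by simp [hD, hxj, hyj]
        rw [if_pos hxj, if_neg (by simp [hyj]), hDj, hhalf]
        linarith
      · rw [if_pos hxj, if_pos hyj]
        have h1' : (0:ℝ) ≤ ((2:ℝ) ^ (d1 j))⁻¹ / 2 := by positivity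
        have h2' : (0:ℝ) ≤ ((2:ℝ) ^ (d2 j))⁻¹ / 2 := by positivity
        have hDj : D j = 1 + min (d1 j) (d2 j) := by simp [hD, hxj, hyj]
        rcases le_total (d1 j) (d2 j) with hm | hm
        · rw [hDj, min_eq_left hm, hhalf]
          linarith
        · rw [hDj, min_eq_right hm, hhalf]
          linarith
    · rw [if_neg hw0]
      linarith
  have hK : (∑ j, if w j ≠ 0 then ((2:ℝ) ^ (D j))⁻¹ else 0) ≤ 1 := by
    calc (∑ j, if w j ≠ 0 then ((2:ℝ) ^ (D j))⁻¹ else 0)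
        ≤ ∑ j, ((if x j ≠ 0 then ((2:ℝ) ^ (d1 j))⁻¹ else 0) / 2
            + (if y j ≠ 0 then ((2:ℝ) ^ (d2 j))⁻¹ else 0) / 2) :=
          Finset.sum_le_sum fun j _ => hpt j
      _ = (∑ j, if x j ≠ 0 then ((2:ℝ) ^ (d1 j))⁻¹ else 0) / 2
            + (∑ j, if y j ≠ 0 then ((2:ℝ) ^ (d2 j))⁻¹ else 0) / 2 := by
          rw [Finset.sum_add_distrib, Finset.sum_div, Finset.sum_div]
      _ ≤ 1 := by linarith
  -- cost bound
  have hsumw : ∑ j, w j = 1 := by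
    calc ∑ j, w j = ∑ j, (t * x j + (1-t) * y j) :=
          Finset.sum_congr rfl fun j _ => hwj j
      _ = t * ∑ j, x j + (1-t) * ∑ j, y j := by
          rw [Finset.sum_add_distrib, Finset.mul_sum, Finset.mul_sum]
      _ = 1 := by rw [hx1, hy1]; ring
  have hpt2 : ∀ j : Fin (n+1),
      w j * (D j : ℝ) ≤ w j + (t * (x j * d1 j) + (1-t) * (y j * d2 j)) := by
    intro j
    by_cases hxj : x j = 0 <;> by_cases hyj : y j = 0
    · have hwj0 : w j = 0 := by rw [hwj, hxj, hyj]; ring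
      rw [hwj0, hxj, hyj]
      ring_nf
      exact le_rfl
    · have hDj : D j = 1 + d2 j := by simp [hD, hxj]
      have hDc : ((D j : ℕ) : ℝ) = 1 + (d2 j : ℝ) := by
        rw [hDj, Nat.cast_add, Nat.cast_one]
      have hwj' : w j = (1-t) * y j := by rw [hwj, hxj]; ring
      rw [hDc, hwj', hxj]
      ring_nf
      exact le_rfl
    · have hDj : D j = 1 + d1 j := by simp [hD, hxj, hyj]
      have hDc : ((D j : ℕ) : ℝ) = 1 + (d1 j : ℝ) := by
        rw [hDj, Nat.cast_add, Nat.cast_one]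
      have hwj' : w j = t * x j := by rw [hwj, hyj]; ring
      rw [hDc, hwj', hyj]
      ring_nf
      exact le_rfl
    · have hDj : D j = 1 + min (d1 j) (d2 j) := by simp [hD, hxj, hyj]
      have hDc : ((D j : ℕ) : ℝ) = 1 + ((min (d1 j) (d2 j) : ℕ) : ℝ) := by
        rw [hDj, Nat.cast_add, Nat.cast_one]
      have hm1 : ((min (d1 j) (d2 j) : ℕ) : ℝ) ≤ (d1 j : ℝ) := by
        exact_mod_cast min_le_left _ _
      have hm2 : ((min (d1 j) (d2 j) : ℕ) : ℝ) ≤ (d2 j : ℝ) := by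
        exact_mod_cast min_le_right _ _
      have htx : 0 ≤ t * x j := mul_nonneg ht0.le (hx0 j)
      have hty : 0 ≤ (1-t) * y j := mul_nonneg (by linarith) (hy0 j)
      have e1 := mul_le_mul_of_nonneg_left hm1 htx
      have e2 := mul_le_mul_of_nonneg_left hm2 hty
      rw [hDc, hwj]
      nlinarith [e1, e2]
  have hcost : (∑ j, w j * (D j : ℝ))
      ≤ 1 + (t * (∑ j, x j * (d1 j : ℝ)) + (1-t) * (∑ j, y j * (d2 j : ℝ))) := by
    calc (∑ j, w j * (D j : ℝ))
        ≤ ∑ j, (w j + (t * (x j * d1 j) + (1-t) * (y j * d2 j))) :=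
          Finset.sum_le_sum fun j _ => hpt2 j
      _ = (∑ j, w j) + (t * (∑ j, x j * (d1 j:ℝ)) + (1-t) * (∑ j, y j * (d2 j:ℝ))) := by
          rw [Finset.sum_add_distrib, Finset.sum_add_distrib, Finset.mul_sum, Finset.mul_sum]
      _ = 1 + (t * (∑ j, x j * (d1 j:ℝ)) + (1-t) * (∑ j, y j * (d2 j:ℝ))) := by
          rw [hsumw]
  have hEw : Efun18 n w ≤ ∑ j, w j * (D j : ℝ) :=
    csInf_le (costSet18_bddBelow n hwpos) ⟨D, hK, rfl⟩
  have hta : t * (∑ j, x j * (d1 j : ℝ)) ≤ t * (Efun18 n x + ε) :=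
    mul_le_mul_of_nonneg_left halt.le ht0.le
  have htb : (1-t) * (∑ j, y j * (d2 j : ℝ)) ≤ (1-t) * (Efun18 n y + ε) :=
    mul_le_mul_of_nonneg_left hblt.le (by linarith)
  have : Efun18 n w ≤ 1 + (t * (Efun18 n x + ε) + (1-t) * (Efun18 n y + ε)) := by
    linarith
  calc Efun18 n w ≤ 1 + (t * (Efun18 n x + ε) + (1-t) * (Efun18 n y + ε)) := this
    _ = t * Efun18 n x + (1 - t) * Efun18 n y + 1 + ε := by ring

lemma kappa2_le_mem (n : ℕ) (hn : 1 ≤ n) {c : ℝ}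
    (hc : c ∈ costSet18 n (fun _ => ((n:ℝ)+1)⁻¹)) : kappa2 n ≤ c := by
  classical
  obtain ⟨d, hk, rfl⟩ := hc
  have hN : (0:ℝ) < (n:ℝ) + 1 := by positivity
  have hNe : ((n:ℝ)+1)⁻¹ ≠ 0 := by positivity
  have hk' : (∑ j, ((2:ℝ) ^ (d j))⁻¹) ≤ 1 := by
    have h := hk
    simpa [hNe] using h
  unfold kappa2
  set m : ℤ := ⌊Real.logb 2 (n:ℝ)⌋ with hm
  have hm0 : 0 ≤ m :=
    Int.floor_nonneg.2 (Real.logb_nonneg one_lt_two (by exact_mod_cast hn))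
  set M : ℕ := m.toNat with hM
  have hmM : (m:ℝ) = (M:ℝ) := by exact_mod_cast (Int.toNat_of_nonneg hm0).symm
  have hzpow : (2:ℝ) ^ (m:ℤ) = 2 ^ M := by
    rw [show m = (M:ℤ) from (Int.toNat_of_nonneg hm0).symm, zpow_natCast]
  have hsum : ((n:ℝ)+1) * ((M:ℝ)+2)
      ≤ (∑ j, (d j:ℝ)) + 2^(M+1) * ∑ j, ((2:ℝ)^(d j))⁻¹ := by
    have h : (∑ _j : Fin (n+1), ((M:ℝ)+2))
        ≤ ∑ j : Fin (n+1), ((d j : ℝ) + 2^(M+1) * ((2:ℝ)^(d j))⁻¹) :=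
      Finset.sum_le_sum (fun j _ => perj18 M (d j))
    rw [Finset.sum_const, Finset.card_univ, Fintype.card_fin, nsmul_eq_mul] at h
    rw [Finset.sum_add_distrib, ← Finset.mul_sum] at h
    push_cast at h ⊢
    linarith
  have h2le : 2^(M+1) * (∑ j, ((2:ℝ)^(d j))⁻¹) ≤ 2^(M+1) * 1 :=
    mul_le_mul_of_nonneg_left hk' (by positivity)
  have hS : ((n:ℝ)+1) * ((M:ℝ)+2) - 2^(M+1) ≤ ∑ j, (d j:ℝ) := by
    linarith
  have hcost : (∑ j, ((n:ℝ)+1)⁻¹ * (d j:ℝ)) = (∑ j, (d j:ℝ)) / ((n:ℝ)+1) := by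
    rw [← Finset.mul_sum]; ring
  rw [hcost, le_div_iff₀ hN]
  rw [hmM, hzpow]
  have h2 : (2:ℝ)^(M+1) = 2 * 2^M := by rw [pow_succ]; ring
  have hexp : ((M:ℝ) + 2 * (((n:ℝ)+1) - 2^M) / ((n:ℝ)+1)) * ((n:ℝ)+1)
      = (M:ℝ)*((n:ℝ)+1) + 2*(((n:ℝ)+1) - 2^M) := by
    field_simp
  rw [hexp]
  nlinarith [hS, h2]

theorem stmt18 (n : ℕ) (hn : 1 ≤ n) :
    ∃ f : (Fin (n + 1) → ℝ) → ℝ,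
      (∀ x ∈ stdSimplex ℝ (Fin (n + 1)), ∀ y ∈ stdSimplex ℝ (Fin (n + 1)),
        ∀ t : ℝ, 0 ≤ t → t ≤ 1 →
          f (t • x + (1 - t) • y) ≤ t * f x + (1 - t) * f y + 1) ∧
      ∀ g : (Fin (n + 1) → ℝ) → ℝ,
        ConvexOn ℝ (stdSimplex ℝ (Fin (n + 1))) g →
        (∀ x ∈ stdSimplex ℝ (Fin (n + 1)), g x ≤ f x) →
        ∀ c : ℝ, (∀ x ∈ stdSimplex ℝ (Fin (n + 1)), f x - g x ≤ c) →
          kappa2 n ≤ c := by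
  classical
  refine ⟨Efun18 n, ?_, ?_⟩
  · intro x hx y hy t h0 h1
    exact Efun18_approx_convex n hx hy h0 h1
  · intro g hg hgle c hc
    have hN : (0:ℝ) < (n:ℝ)+1 := by positivity
    set bary : Fin (n+1) → ℝ := fun _ => ((n:ℝ)+1)⁻¹ with hb
    have hsum1 : ∑ _j : Fin (n+1), ((n:ℝ)+1)⁻¹ = 1 := by
      rw [Finset.sum_const, Finset.card_univ, Fintype.card_fin, nsmul_eq_mul]
      push_cast
      field_simp
    have hbary : bary ∈ stdSimplex ℝ (Fin (n+1)) := by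
      refine ⟨fun i => by positivity, ?_⟩
      simpa [hb] using hsum1
    have hrep : (∑ j : Fin (n+1), ((n:ℝ)+1)⁻¹ • (Pi.single j 1 : Fin (n+1) → ℝ)) = bary := by
      funext i
      rw [Finset.sum_apply]
      simp only [Pi.smul_apply, smul_eq_mul]
      rw [← Finset.mul_sum, Finset.sum_pi_single]
      simp [hb]
    have hgb : g bary ≤ 0 := by
      have hjen := hg.map_sum_le (t := Finset.univ) (w := fun _ => ((n:ℝ)+1)⁻¹)
        (p := fun j => Pi.single j (1:ℝ)) (fun i _ => by positivity) hsum1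
        (fun i _ => single_mem_stdSimplex ℝ i)
      rw [hrep] at hjen
      refine hjen.trans (Finset.sum_nonpos fun j _ => ?_)
      have h1 : g (Pi.single j 1) ≤ Efun18 n (Pi.single j 1) :=
        hgle _ (single_mem_stdSimplex ℝ j)
      have h2 : g (Pi.single j 1) ≤ 0 := h1.trans (Efun18_single n j)
      have h3 : ((n:ℝ)+1)⁻¹ • g (Pi.single j 1) ≤ ((n:ℝ)+1)⁻¹ • (0:ℝ) :=
        smul_le_smul_of_nonneg_left h2 (by positivity)
      simpa using h3
    have hfb : kappa2 n ≤ Efun18 n bary := by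
      refine le_csInf (costSet18_nonempty n bary) fun c' hc' => kappa2_le_mem n hn ?_
      rw [hb] at hc'
      exact hc'
    have hcb := hc bary hbary
    linarith
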